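/- Let V be a k-vector space with basis {e_i}_{i≥1}. The vectors v₁ = e₂, v₂ = e₂ + e₄, v₃ = e₁ + e₄, and for i ≥ 2, v_{2i} = e_{2i} + e_{2i+2}, v_{2i+1} = e_{2i−1} + e_{2i+2}, form a basis of V. -/

import Mathlib

/-- The standard basis `e i = single i 1` of the space with countable basis indexed by `i ≥ 1`. -/
noncomputable def e (k : Type*) [Field k] (i : ℕ+) : ℕ+ →₀ k := Finsupp.single i 1

/-- The vectors `v₁ = e₂`, `v_{2i} = e_{2i} + e_{2i+2}`, `v_{2i+1} = e_{2i-1} + e_{2i+2}`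
(for `i ≥ 1`), rewritten in terms of the index `j`. -/
noncomputable def v (k : Type*) [Field k] (j : ℕ+) : ℕ+ →₀ k :=
  if j = 1 then e k 2
  else if Even (j : ℕ) then e k j + e k (j + 2)
  else e k (j - 2) + e k (j + 1)

private lemma pn {a b : ℕ+} : a = b ↔ (a:ℕ) = (b:ℕ) := PNat.coe_inj.symm

private lemma pnsub (a : ℕ+) (h : 2 < (a:ℕ)) : ((a - 2 : ℕ+):ℕ) = (a:ℕ) - 2 := by
  rw [PNat.sub_coe, if_pos]
  · norm_cast
  · rw [← PNat.coe_lt_coe, PNat.val_ofNat]; exact h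

private lemma pnsub1 (a : ℕ+) (h : 1 < (a:ℕ)) : ((a - 1 : ℕ+):ℕ) = (a:ℕ) - 1 := by
  rw [PNat.sub_coe, if_pos]
  · norm_cast
  · rw [← PNat.coe_lt_coe, PNat.one_coe]; exact h

/-- coordinate of `v k j` at an odd index `i`. -/
private lemma v_apply_odd (k : Type*) [Field k] {i : ℕ+} (hi : (i:ℕ) % 2 = 1) (j : ℕ+) :
    (v k j) i = if j = i + 2 then 1 else 0 := by
  have hi1 : 1 ≤ (i:ℕ) := i.one_le
  unfold v e
  rcases eq_or_ne j 1 with rfl | hj1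
  · have d1 : ¬ ((1:ℕ+) = i + 2) := by
      simp only [pn, PNat.add_coe, PNat.one_coe, PNat.val_ofNat]; omega
    have d2 : ¬ ((2:ℕ+) = i) := by simp only [pn, PNat.val_ofNat]; omega
    rw [if_pos rfl, Finsupp.single_apply, if_neg d1, if_neg d2]
  · have hj1' : (j:ℕ) ≠ 1 := by simpa only [Ne, pn, PNat.one_coe] using hj1
    have hj2 : 1 ≤ (j:ℕ) := j.one_le
    rw [if_neg hj1]
    by_cases hje : Even (j:ℕ)
    · rw [Nat.even_iff] at hje
      have d1 : ¬ (j = i) := by simp only [pn]; omega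
      have d2 : ¬ (j + 2 = i) := by simp only [pn, PNat.add_coe, PNat.val_ofNat]; omega
      have d3 : ¬ (j = i + 2) := by simp only [pn, PNat.add_coe, PNat.val_ofNat]; omega
      rw [if_pos (Nat.even_iff.mpr hje), Finsupp.add_apply, Finsupp.single_apply,
        Finsupp.single_apply, if_neg d1, if_neg d2, if_neg d3, add_zero]
    · rw [Nat.even_iff] at hje
      have h3 : 2 < (j:ℕ) := by omega
      have hsub := pnsub j h3
      have d0 : ¬ Even (j:ℕ) := by rw [Nat.even_iff]; omega
      have d1 : ¬ (j + 1 = i) := by simp only [pn, PNat.add_coe, PNat.one_coe]; omega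
      have hiff : (j - 2 = i) ↔ (j = i + 2) := by
        simp only [pn, PNat.add_coe, PNat.val_ofNat, hsub]; omega
      rw [if_neg d0, Finsupp.add_apply, Finsupp.single_apply, Finsupp.single_apply,
        if_neg d1, add_zero]
      simp only [hiff]

/-- coordinate of `v k j` at an even index `i ≥ 4`. -/
private lemma v_apply_even4 (k : Type*) [Field k] {i : ℕ+} (hi : (i:ℕ) % 2 = 0)
    (hi4 : 4 ≤ (i:ℕ)) (j : ℕ+) :
    (v k j) i = (if j = i - 2 then 1 else 0) + (if j = i - 1 then 1 else 0)
      + (if j = i then 1 else 0) := by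
  have hisub : ((i - 2 : ℕ+):ℕ) = (i:ℕ) - 2 := pnsub i (by omega)
  have hisub1 : ((i - 1 : ℕ+):ℕ) = (i:ℕ) - 1 := pnsub1 i (by omega)
  unfold v e
  rcases eq_or_ne j 1 with rfl | hj1
  · have d1 : ¬ ((1:ℕ+) = i - 2) := by simp only [pn, PNat.one_coe, hisub]; omega
    have d2 : ¬ ((1:ℕ+) = i - 1) := by simp only [pn, PNat.one_coe, hisub1]; omega
    have d3 : ¬ ((1:ℕ+) = i) := by simp only [pn, PNat.one_coe]; omega
    have d4 : ¬ ((2:ℕ+) = i) := by simp only [pn, PNat.val_ofNat]; omega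
    rw [if_pos rfl, Finsupp.single_apply, if_neg d1, if_neg d2, if_neg d3, if_neg d4]
    ring
  · have hj1' : (j:ℕ) ≠ 1 := by simpa only [Ne, pn, PNat.one_coe] using hj1
    have hj2 : 1 ≤ (j:ℕ) := j.one_le
    rw [if_neg hj1]
    by_cases hje : Even (j:ℕ)
    · rw [Nat.even_iff] at hje
      have c1 : (j + 2 = i) ↔ (j = i - 2) := by
        simp only [pn, PNat.add_coe, PNat.val_ofNat, hisub]; omega
      have c2 : ¬ (j = i - 1) := by simp only [pn, hisub1]; omega
      rw [if_pos (Nat.even_iff.mpr hje), Finsupp.add_apply, Finsupp.single_apply,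
        Finsupp.single_apply]
      simp only [c1, if_neg c2, add_zero]
      ring
    · rw [Nat.even_iff] at hje
      have h3 : 2 < (j:ℕ) := by omega
      have hsub := pnsub j h3
      have d0 : ¬ Even (j:ℕ) := by rw [Nat.even_iff]; omega
      have c3 : ¬ (j - 2 = i) := by simp only [pn, hsub]; omega
      have c4 : (j + 1 = i) ↔ (j = i - 1) := by
        simp only [pn, PNat.add_coe, PNat.one_coe, hisub1]; omega
      have c5 : ¬ (j = i - 2) := by simp only [pn, hisub]; omega
      have c6 : ¬ (j = i) := by simp only [pn]; omega
      rw [if_neg d0, Finsupp.add_apply, Finsupp.single_apply, Finsupp.single_apply]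
      simp only [if_neg c3, c4, if_neg c5, if_neg c6, zero_add, add_zero]

/-- coordinate of `v k j` at index `2`. -/
private lemma v_apply_two (k : Type*) [Field k] (j : ℕ+) :
    (v k j) 2 = (if j = 1 then 1 else 0) + (if j = 2 then 1 else 0) := by
  unfold v e
  rcases eq_or_ne j 1 with rfl | hj1
  · have d1 : ¬ ((1:ℕ+) = (2:ℕ+)) := by
      simp only [pn, PNat.one_coe, PNat.val_ofNat]; omega
    rw [if_pos rfl, Finsupp.single_apply, if_pos rfl, if_pos rfl, if_neg d1]
    ring
  · have hj1' : (j:ℕ) ≠ 1 := by simpa only [Ne, pn, PNat.one_coe] using hj1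
    have hj2 : 1 ≤ (j:ℕ) := j.one_le
    rw [if_neg hj1, if_neg hj1, zero_add]
    by_cases hje : Even (j:ℕ)
    · rw [Nat.even_iff] at hje
      have d1 : ¬ (j + 2 = (2:ℕ+)) := by
        simp only [pn, PNat.add_coe, PNat.val_ofNat]; omega
      rw [if_pos (Nat.even_iff.mpr hje), Finsupp.add_apply, Finsupp.single_apply,
        Finsupp.single_apply, if_neg d1, add_zero]
    · rw [Nat.even_iff] at hje
      have h3 : 2 < (j:ℕ) := by omega
      have hsub := pnsub j h3
      have d0 : ¬ Even (j:ℕ) := by rw [Nat.even_iff]; omega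
      have d1 : ¬ (j - 2 = (2:ℕ+)) := by simp only [pn, PNat.val_ofNat, hsub]; omega
      have d2 : ¬ (j + 1 = (2:ℕ+)) := by
        simp only [pn, PNat.add_coe, PNat.one_coe, PNat.val_ofNat]; omega
      have d3 : ¬ (j = (2:ℕ+)) := by simp only [pn, PNat.val_ofNat]; omega
      rw [if_neg d0, Finsupp.add_apply, Finsupp.single_apply, Finsupp.single_apply,
        if_neg d1, if_neg d2, if_neg d3]
      ring

private lemma sum_pick {k : Type*} [Field k] (s : Finset ℕ+) (g : ℕ+ → k)
    (hg : ∀ j ∉ s, g j = 0) (a : ℕ+) :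
    ∑ j ∈ s, g j * (if j = a then 1 else 0) = g a := by
  simp only [mul_ite, mul_one, mul_zero]
  rw [Finset.sum_ite_eq' s a g]
  split_ifs with h
  · rfl
  · exact (hg a h).symm

theorem v_is_basis (k : Type*) [Field k] :
    LinearIndependent k (v k) ∧ Submodule.span k (Set.range (v k)) = ⊤ := by
  constructor
  · -- linear independence
    rw [linearIndependent_iff'']
    intro s g hg hsum
    have key : ∀ i : ℕ+, ∑ j ∈ s, g j * (v k j) i = 0 := by
      intro i
      have := congrArg (fun f : ℕ+ →₀ k => f i) hsum
      simpa [Finset.sum_apply', Finsupp.smul_apply, smul_eq_mul] using this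
    -- odd coefficients (except index 1) vanish
    have hodd : ∀ j : ℕ+, (j:ℕ) % 2 = 1 → j ≠ 1 → g j = 0 := by
      intro j hj hj1
      have hj1' : (j:ℕ) ≠ 1 := fun h => hj1 (by rw [pn, PNat.one_coe]; exact h)
      have hj2 : 1 ≤ (j:ℕ) := j.one_le
      have h3 : 2 < (j:ℕ) := by omega
      have hsub := pnsub j h3
      have hodd2 : ((j - 2 : ℕ+):ℕ) % 2 = 1 := by rw [hsub]; omega
      have h2 : j - 2 + 2 = j := by
        simp only [pn, PNat.add_coe, PNat.val_ofNat, hsub]; omega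
      have := key (j - 2)
      rw [Finset.sum_congr rfl (fun x _ => by rw [v_apply_odd k hodd2 x]), sum_pick s g hg,
        h2] at this
      exact this
    -- at coordinate 2 : g 1 + g 2 = 0
    have h12 : g 1 + g 2 = 0 := by
      have := key 2
      rw [Finset.sum_congr rfl (fun x _ => by rw [v_apply_two k x]),
        Finset.sum_congr rfl (fun x _ => (mul_add _ _ _)), Finset.sum_add_distrib,
        sum_pick s g hg, sum_pick s g hg] at this
      exact this
    -- even descent : g j = - g (j + 2)
    have hstep : ∀ j : ℕ+, (j:ℕ) % 2 = 0 → g j = - g (j + 2) := by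
      intro j hj
      have hj2 : 1 ≤ (j:ℕ) := j.one_le
      have hc : ((j + 2 : ℕ+):ℕ) = (j:ℕ) + 2 := by rw [PNat.add_coe, PNat.val_ofNat]
      have hi : ((j + 2 : ℕ+):ℕ) % 2 = 0 := by rw [hc]; omega
      have hi4 : 4 ≤ ((j + 2 : ℕ+):ℕ) := by rw [hc]; omega
      have := key (j + 2)
      rw [Finset.sum_congr rfl (fun x _ => by rw [v_apply_even4 k hi hi4 x]),
        Finset.sum_congr rfl (fun x _ => by rw [mul_add, mul_add]),
        Finset.sum_add_distrib, Finset.sum_add_distrib,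
        sum_pick s g hg, sum_pick s g hg, sum_pick s g hg] at this
      have hsub : j + 2 - 2 = j := by
        simp only [pn, pnsub (j+2) (by rw [hc]; omega), hc]; omega
      have hsub1 : ((j + 2 - 1 : ℕ+):ℕ) = (j:ℕ) + 1 := by
        rw [pnsub1 (j+2) (by rw [hc]; omega), hc]
        omega
      have hmid : g (j + 2 - 1) = 0 := by
        apply hodd
        · rw [hsub1]; omega
        · intro h; rw [pn, PNat.one_coe, hsub1] at h; omega
      rw [hsub, hmid] at this
      linear_combination this
    -- all even coefficients vanish
    set M := s.sup (fun x => (x:ℕ)) with hM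
    have hbound : ∀ j ∈ s, (j:ℕ) ≤ M := fun j hj => Finset.le_sup hj
    have hdesc : ∀ n : ℕ, ∀ j : ℕ+, (j:ℕ) % 2 = 0 → M < (j:ℕ) + 2*n → g j = 0 := by
      intro n
      induction n with
      | zero =>
        intro j _ h
        apply hg
        intro hj
        exact absurd (hbound j hj) (by omega)
      | succ n ih =>
        intro j hj h
        have hc : ((j + 2 : ℕ+):ℕ) = (j:ℕ) + 2 := by rw [PNat.add_coe, PNat.val_ofNat]
        rw [hstep j hj, ih (j+2) (by rw [hc]; omega) (by rw [hc]; omega), neg_zero]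
    have hevenAll : ∀ j : ℕ+, (j:ℕ) % 2 = 0 → g j = 0 := fun j hj =>
      hdesc (M+1) j hj (by have : 1 ≤ (j:ℕ) := j.one_le; omega)
    intro j
    have hj2 : 1 ≤ (j:ℕ) := j.one_le
    by_cases hje : (j:ℕ) % 2 = 0
    · exact hevenAll j hje
    · rcases eq_or_ne j 1 with rfl | hj1
      · have h2 : g 2 = 0 := hevenAll 2 (by rw [PNat.val_ofNat])
        linear_combination h12 - h2
      · exact hodd j (by omega) hj1
  · -- spanning
    set P := Submodule.span k (Set.range (v k)) with hP
    have hv : ∀ j, v k j ∈ P := fun j => Submodule.subset_span ⟨j, rfl⟩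
    have f1 : v k 1 = e k 2 := by simp [v]
    have feven : ∀ j : ℕ+, (j:ℕ) % 2 = 0 → v k j = e k j + e k (j + 2) := by
      intro j hj
      have : j ≠ 1 := fun h => by rw [pn, PNat.one_coe] at h; omega
      rw [v, if_neg this, if_pos (Nat.even_iff.mpr hj)]
    have fodd : ∀ j : ℕ+, (j:ℕ) % 2 = 1 → j ≠ 1 → v k j = e k (j - 2) + e k (j + 1) := by
      intro j hj hj1
      rw [v, if_neg hj1, if_neg (by rw [Nat.even_iff]; omega)]
    -- all even e's are in P
    have hevenP : ∀ n : ℕ, ∀ j : ℕ+, (j:ℕ) = 2*n + 2 → e k j ∈ P := by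
      intro n
      induction n with
      | zero =>
        intro j hj
        have : j = 2 := by simp only [pn, PNat.val_ofNat]; omega
        subst this
        rw [← f1]; exact hv 1
      | succ n ih =>
        intro j hj
        have h3 : 2 < (j:ℕ) := by omega
        have hsub : ((j - 2 : ℕ+):ℕ) = 2*n + 2 := by rw [pnsub j h3]; omega
        have h1 := ih (j - 2) hsub
        have h2 : v k (j - 2) = e k (j - 2) + e k ((j - 2) + 2) :=
          feven _ (by rw [hsub]; omega)
        have h4 : (j - 2) + 2 = j := by
          simp only [pn, PNat.add_coe, PNat.val_ofNat, pnsub j h3]; omega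
        have : e k j = v k (j - 2) - e k (j - 2) := by
          rw [h2, h4]; exact (add_sub_cancel_left _ _).symm
        rw [this]
        exact Submodule.sub_mem _ (hv _) h1
    have hoddP : ∀ j : ℕ+, (j:ℕ) % 2 = 1 → e k j ∈ P := by
      intro j hj
      have hj1 : 1 ≤ (j:ℕ) := j.one_le
      have hc : ((j + 2 : ℕ+):ℕ) = (j:ℕ) + 2 := by rw [PNat.add_coe, PNat.val_ofNat]
      have hne : (j + 2 : ℕ+) ≠ 1 := fun h => by rw [pn, PNat.one_coe, hc] at h; omega
      have hno : ((j + 2 : ℕ+):ℕ) % 2 = 1 := by rw [hc]; omega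
      have h2 : v k (j + 2) = e k ((j + 2) - 2) + e k ((j + 2) + 1) := fodd _ hno hne
      have h3 : (j + 2) - 2 = j := by
        simp only [pn, pnsub (j+2) (by rw [hc]; omega), hc]; omega
      have h4 : e k ((j + 2) + 1) ∈ P := by
        apply hevenP (((j:ℕ) + 1) / 2)
        rw [PNat.add_coe, hc, PNat.one_coe]
        omega
      have : e k j = v k (j + 2) - e k ((j + 2) + 1) := by
        rw [h2, h3]; exact (add_sub_cancel_right _ _).symm
      rw [this]
      exact Submodule.sub_mem _ (hv _) h4
    have hall : ∀ j : ℕ+, e k j ∈ P := by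
      intro j
      have hj1 : 1 ≤ (j:ℕ) := j.one_le
      by_cases hje : (j:ℕ) % 2 = 0
      · apply hevenP (((j:ℕ) - 2) / 2)
        omega
      · exact hoddP j (by omega)
    rw [eq_top_iff]
    intro x _
    induction x using Finsupp.induction with
    | zero => exact zero_mem _
    | single_add a b f _ _ ih =>
      refine Submodule.add_mem _ ?_ (ih Submodule.mem_top)
      have : Finsupp.single a b = b • e k a := by
        rw [e, Finsupp.smul_single, smul_eq_mul, mul_one]
      rw [this]
      exact Submodule.smul_mem _ _ (hall a)
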